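/- For any ε > 0 and any θ ∈ [-π/2, π/2], there exists θ* ∈ [-π/2, π/2] with 2^n tan(θ*/2) an integer for n = ⌈log₂(1/ε)⌉, such that 2|sin((θ - θ*)/2)| ≤ ε and (1 + tan²(θ*/2))/2 ≥ 1/2. -/

import Mathlib

open Real

lemma arctan_lipschitz : LipschitzWith 1 Real.arctan := by
  apply lipschitzWith_of_nnnorm_deriv_le Real.differentiable_arctan
  intro x
  rw [Real.deriv_arctan]
  rw [← NNReal.coe_le_coe, coe_nnnorm, Real.norm_eq_abs, NNReal.coe_one]
  rw [abs_of_nonneg (by positivity), div_le_one (by positivity)]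
  nlinarith [sq_nonneg x]

theorem stmt_19 (ε θ : ℝ) (hε : 0 < ε)
    (hθ : θ ∈ Set.Icc (-(π / 2)) (π / 2)) :
    ∃ θs ∈ Set.Icc (-(π / 2)) (π / 2),
      (∃ z : ℤ, (2 : ℝ) ^ (⌈Real.logb 2 (1 / ε)⌉) * Real.tan (θs / 2) = z) ∧
      2 * |Real.sin ((θ - θs) / 2)| ≤ ε ∧
      (1 + Real.tan (θs / 2) ^ 2) / 2 ≥ 1 / 2 := by
  obtain ⟨hθ1, hθ2⟩ := hθ
  have hpi : (0:ℝ) < π := Real.pi_pos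
  set n : ℤ := ⌈Real.logb 2 (1 / ε)⌉ with hn
  rcases lt_or_ge n 0 with hneg | hpos
  · -- n < 0, so ε ≥ 2; take θs = 0
    have h1 : Real.logb 2 (1 / ε) ≤ (n : ℝ) := Int.le_ceil _
    have h2 : (n : ℝ) ≤ -1 := by
      have : n ≤ -1 := by omega
      exact_mod_cast this
    have hlogb : Real.logb 2 (1 / ε) ≤ -1 := h1.trans h2
    have h3 : (1 / ε : ℝ) ≤ 2 ^ (-1 : ℝ) := by
      calc (1 / ε : ℝ) = 2 ^ Real.logb 2 (1 / ε) :=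
            (Real.rpow_logb (by norm_num) (by norm_num) (by positivity)).symm
        _ ≤ 2 ^ (-1 : ℝ) := by
            apply Real.rpow_le_rpow_of_exponent_le (by norm_num) hlogb
    have h4 : (2:ℝ) ^ (-1:ℝ) = 1/2 := by
      rw [Real.rpow_neg_one]; norm_num
    have hε2 : (2:ℝ) ≤ ε := by
      rw [h4, div_le_div_iff₀ hε (by norm_num)] at h3; linarith
    refine ⟨0, ⟨by linarith, by linarith⟩, ⟨0, by simp⟩, ?_, by nlinarith [sq_nonneg (Real.tan 0)]⟩
    calc 2 * |Real.sin ((θ - 0) / 2)| ≤ 2 * 1 := by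
          have := Real.abs_sin_le_one ((θ - 0)/2); linarith
      _ ≤ ε := by linarith
  · -- main case n ≥ 0
    have hpow : (0:ℝ) < (2:ℝ) ^ n := zpow_pos (by norm_num) n
    set t : ℝ := Real.tan (θ / 2) with ht
    set z : ℤ := round ((2:ℝ) ^ n * t) with hz
    set ts : ℝ := (z : ℝ) / (2:ℝ) ^ n with hts
    set θs : ℝ := 2 * Real.arctan ts with hθs
    have hθhalf1 : -(π/2) < θ / 2 := by nlinarith
    have hθhalf2 : θ / 2 < π/2 := by nlinarith
    -- |t| ≤ 1
    have habs_t : |t| ≤ 1 := by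
      rw [abs_le]
      have hmem1 : θ/2 ∈ Set.Ioo (-(π/2)) (π/2) := ⟨hθhalf1, hθhalf2⟩
      have hmem2 : (π/4 : ℝ) ∈ Set.Ioo (-(π/2)) (π/2) := ⟨by linarith, by linarith⟩
      have hmem3 : (-(π/4) : ℝ) ∈ Set.Ioo (-(π/2)) (π/2) := ⟨by linarith, by linarith⟩
      constructor
      · have := Real.strictMonoOn_tan.monotoneOn hmem3 hmem1 (by linarith)
        rw [show (-(π/4):ℝ) = -(π/4) from rfl] at this
        rw [Real.tan_neg, Real.tan_pi_div_four] at this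
        linarith
      · have := Real.strictMonoOn_tan.monotoneOn hmem1 hmem2 (by linarith)
        rw [Real.tan_pi_div_four] at this
        linarith
    -- N : 2^n as an integer
    have hNr : ((2 ^ n.toNat : ℤ) : ℝ) = (2:ℝ) ^ n := by
      push_cast
      rw [← zpow_natCast, Int.toNat_of_nonneg hpos]
    set N : ℤ := 2 ^ n.toNat with hN
    -- bound z
    have hx1 : (2:ℝ) ^ n * t ≤ N := by
      rw [hNr]
      nlinarith [abs_le.mp habs_t]
    have hx2 : (-N : ℝ) ≤ (2:ℝ) ^ n * t := by
      rw [hNr]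
      nlinarith [abs_le.mp habs_t]
    have hzub : z ≤ N := by
      rw [hz, round_eq]
      calc ⌊(2:ℝ)^n * t + 1/2⌋ ≤ ⌊(N:ℝ) + 1/2⌋ := Int.floor_le_floor (by linarith)
        _ = N := by rw [Int.floor_intCast_add]; norm_num
    have hzlb : -N ≤ z := by
      rw [hz, round_eq]
      calc (-N : ℤ) = ⌊((-N : ℤ) : ℝ) + 1/2⌋ := by rw [Int.floor_intCast_add]; norm_num
        _ ≤ ⌊(2:ℝ)^n * t + 1/2⌋ := Int.floor_le_floor (by push_cast; linarith)
    -- |ts| ≤ 1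
    have habs_ts : |ts| ≤ 1 := by
      rw [hts, abs_div, abs_of_pos hpow, div_le_one hpow]
      rw [abs_le]
      constructor
      · rw [← hNr]; exact_mod_cast hzlb
      · rw [← hNr]; exact_mod_cast hzub
    -- θ and θs via arctan
    have hθeq : θ = 2 * Real.arctan t := by
      rw [ht, Real.arctan_tan hθhalf1 hθhalf2]; ring
    have harctan_ts : Real.arctan ts ∈ Set.Icc (-(π/4)) (π/4) := by
      constructor
      · have := Real.arctan_strictMono.monotone (neg_le_of_abs_le habs_ts)
        rwa [show Real.arctan (-1) = -(π/4) by rw [Real.arctan_neg, Real.arctan_one]] at this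
      · have := Real.arctan_strictMono.monotone (le_of_abs_le habs_ts)
        rwa [Real.arctan_one] at this
    have hθs_mem : θs ∈ Set.Icc (-(π/2)) (π/2) := by
      obtain ⟨a, b⟩ := harctan_ts
      exact ⟨by rw [hθs]; linarith, by rw [hθs]; linarith⟩
    have htan_θs : Real.tan (θs / 2) = ts := by
      rw [hθs, mul_div_cancel_left₀ _ (two_ne_zero), Real.tan_arctan]
    -- 2^n ≥ 1/ε
    have h2n : 1 / ε ≤ (2:ℝ) ^ n := by
      have h1 : Real.logb 2 (1 / ε) ≤ (n : ℝ) := Int.le_ceil _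
      calc (1 / ε : ℝ) = 2 ^ Real.logb 2 (1 / ε) :=
            (Real.rpow_logb (by norm_num) (by norm_num) (by positivity)).symm
        _ ≤ (2:ℝ) ^ (n : ℝ) := Real.rpow_le_rpow_of_exponent_le (by norm_num) h1
        _ = (2:ℝ) ^ n := Real.rpow_intCast 2 n
    -- |t - ts| ≤ (1/2)/2^n
    have hclose : |t - ts| ≤ (1/2) / (2:ℝ)^n := by
      have h1 : |(2:ℝ)^n * t - z| ≤ 1/2 := abs_sub_round _
      have h2 : t - ts = ((2:ℝ)^n * t - z) / (2:ℝ)^n := by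
        rw [hts]; field_simp
      rw [h2, abs_div, abs_of_pos hpow]
      exact div_le_div_of_nonneg_right h1 hpow.le
    -- final
    refine ⟨θs, hθs_mem, ⟨z, by rw [htan_θs, hts]; field_simp⟩, ?_,
      by nlinarith [sq_nonneg (Real.tan (θs/2))]⟩
    have hsin : |Real.sin ((θ - θs) / 2)| ≤ |(θ - θs) / 2| := Real.abs_sin_le_abs
    have hlip : |Real.arctan t - Real.arctan ts| ≤ |t - ts| := by
      have := arctan_lipschitz.dist_le_mul t ts
      simpa [Real.dist_eq] using this
    have hdiff : |(θ - θs)/2| = |Real.arctan t - Real.arctan ts| := by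
      rw [hθeq, hθs]
      rw [show (2 * Real.arctan t - 2 * Real.arctan ts) / 2 = Real.arctan t - Real.arctan ts by ring]
    have hfin : (1/2) / (2:ℝ)^n ≤ ε / 2 := by
      rw [div_le_div_iff₀ hpow (by norm_num)]
      rw [div_le_iff₀ hε] at h2n
      nlinarith
    calc 2 * |Real.sin ((θ - θs) / 2)| ≤ 2 * |(θ - θs)/2| := by linarith
      _ = 2 * |Real.arctan t - Real.arctan ts| := by rw [hdiff]
      _ ≤ 2 * |t - ts| := by linarith
      _ ≤ 2 * ((1/2) / (2:ℝ)^n) := by linarith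
      _ ≤ ε := by linarith
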